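/- Let 0 < b_c < a_c and let P = (x, y, z) have elliptic coordinates k₀, k₁, k₂ with −a_c² < k₂ < −b_c² < k₁ < 0 < k₀ (i.e., x²/(a_c² + k_i) + y²/(b_c² + k_i) + z²/k_i = 1 for i = 0, 1, 2). With n₀, n₂ and the semiaxes a_e, b_e, c_e, a_{h2}, b_{h2}, c_{h2} as in the confocal setup, set v± := a_e b_e c_e · n₀ ± a_{h2} b_{h2} c_{h2} · n₂ (the two generator directions of the one-sheeted hyperboloid ℋ₁ through P). Then the reflection in the tangent plane to the ellipsoid ℰ at P, i.e., the linear map w ↦ w − 2(⟨w, n₀⟩/‖n₀‖²)·n₀, maps v₊ to −v₋. Hence this reflection exchanges the two generators of ℋ₁ through P. -/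

import Mathlib

set_option maxHeartbeats 1000000


open scoped RealInnerProductSpace

/-- The reflection in the tangent plane of the ellipsoid `ℰ` at `P` maps the
generator direction `v₊` of the confocal one-sheeted hyperboloid `ℋ₁` through
`P` to `−v₋`: it exchanges the two generators of `ℋ₁` through `P`. -/
theorem stmt10 (ac bc x y z k0 k1 k2 : ℝ) (hbc : 0 < bc) (hba : bc < ac)
    (hk2 : -ac ^ 2 < k2) (hk2' : k2 < -bc ^ 2) (hk1 : -bc ^ 2 < k1)
    (hk1' : k1 < 0) (hk0 : 0 < k0)
    (h0 : x ^ 2 / (ac ^ 2 + k0) + y ^ 2 / (bc ^ 2 + k0) + z ^ 2 / k0 = 1)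
    (h1 : x ^ 2 / (ac ^ 2 + k1) + y ^ 2 / (bc ^ 2 + k1) + z ^ 2 / k1 = 1)
    (h2 : x ^ 2 / (ac ^ 2 + k2) + y ^ 2 / (bc ^ 2 + k2) + z ^ 2 / k2 = 1)
    (ae be ce ah2 bh2 ch2 : ℝ)
    (hae : ae = Real.sqrt (ac ^ 2 + k0)) (hbe : be = Real.sqrt (bc ^ 2 + k0))
    (hce : ce = Real.sqrt k0)
    (hah2 : ah2 = Real.sqrt (ac ^ 2 + k2))
    (hbh2 : bh2 = Real.sqrt (-(bc ^ 2 + k2)))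
    (hch2 : ch2 = Real.sqrt (-k2))
    (n0 n2 vplus vminus : EuclideanSpace ℝ (Fin 3))
    (hn0 : n0 = ![x / (ac ^ 2 + k0), y / (bc ^ 2 + k0), z / k0])
    (hn2 : n2 = ![x / (ac ^ 2 + k2), y / (bc ^ 2 + k2), z / k2])
    (hvp : vplus = (ae * be * ce) • n0 + (ah2 * bh2 * ch2) • n2)
    (hvm : vminus = (ae * be * ce) • n0 - (ah2 * bh2 * ch2) • n2) :
    vplus - (2 * (⟪vplus, n0⟫ / ‖n0‖ ^ 2)) • n0 = -vminus := by
  have hA : (0:ℝ) < ac ^ 2 + k0 := by nlinarith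
  have hB : (0:ℝ) < bc ^ 2 + k0 := by nlinarith
  have hA2 : (0:ℝ) < ac ^ 2 + k2 := by nlinarith
  have hB2 : bc ^ 2 + k2 < 0 := by nlinarith
  have hk2n : k2 < 0 := by nlinarith
  have nA := hA.ne'
  have nB := hB.ne'
  have nC := hk0.ne'
  have nA2 := hA2.ne'
  have nB2 := hB2.ne
  have nC2 := hk2n.ne
  -- orthogonality of the confocal normals n2 and n0
  have key : ⟪n2, n0⟫ = 0 := by
    rw [PiLp.inner_apply, Fin.sum_univ_three, hn0, hn2]
    simp only [Matrix.cons_val_zero, Matrix.cons_val_one, Matrix.head_cons,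
      Matrix.cons_val_two, Matrix.tail_cons, RCLike.inner_apply, conj_trivial]
    have e0 : x ^ 2 / (ac ^ 2 + k0) + y ^ 2 / (bc ^ 2 + k0) + z ^ 2 / k0
        - (x ^ 2 / (ac ^ 2 + k2) + y ^ 2 / (bc ^ 2 + k2) + z ^ 2 / k2) = 0 := by
      rw [h0, h2]; ring
    have hxa : x ^ 2 / (ac ^ 2 + k0) - x ^ 2 / (ac ^ 2 + k2)
        = (k2 - k0) * (x / (ac ^ 2 + k2) * (x / (ac ^ 2 + k0))) := by
      field_simp; ring
    have hyb : y ^ 2 / (bc ^ 2 + k0) - y ^ 2 / (bc ^ 2 + k2)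
        = (k2 - k0) * (y / (bc ^ 2 + k2) * (y / (bc ^ 2 + k0))) := by
      field_simp; ring
    have hzc : z ^ 2 / k0 - z ^ 2 / k2 = (k2 - k0) * (z / k2 * (z / k0)) := by
      field_simp
    have hk : k2 - k0 ≠ 0 := by nlinarith
    have hmul : (k2 - k0) * (x / (ac ^ 2 + k2) * (x / (ac ^ 2 + k0))
        + y / (bc ^ 2 + k2) * (y / (bc ^ 2 + k0)) + z / k2 * (z / k0)) = 0 := by
      rw [mul_add, mul_add, ← hxa, ← hyb, ← hzc]; linarith [e0]
    linarith [(mul_eq_zero.mp hmul).resolve_left hk]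
  -- n0 is nonzero
  have hn0ne : n0 ≠ 0 := by
    intro h
    replace h := congrArg WithLp.ofLp h
    rw [hn0, WithLp.ofLp_zero] at h
    have hx : x / (ac ^ 2 + k0) = 0 := congrFun h 0
    have hy : y / (bc ^ 2 + k0) = 0 := congrFun h 1
    have hz : z / k0 = 0 := congrFun h 2
    have hx' : x = 0 := by field_simp at hx; simpa using hx
    have hy' : y = 0 := by field_simp at hy; simpa using hy
    have hz' : z = 0 := by field_simp at hz; simpa using hz
    rw [hx', hy', hz'] at h0
    norm_num at h0
  have hnn : ‖n0‖ ^ 2 ≠ 0 := pow_ne_zero 2 (norm_ne_zero_iff.mpr hn0ne)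
  have hip : ⟪vplus, n0⟫ = (ae * be * ce) * ‖n0‖ ^ 2 := by
    rw [hvp, inner_add_left, real_inner_smul_left, real_inner_smul_left, key,
      real_inner_self_eq_norm_sq]
    ring
  have hc : 2 * (⟪vplus, n0⟫ / ‖n0‖ ^ 2) = 2 * (ae * be * ce) := by
    rw [hip]
    field_simp
  rw [hc, hvp, hvm]
  module
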